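/- Under the genericity assumption that u_j v̄_j ≠ 1 for all j and g_j(u, v̄) ≠ 0 for all j (where g_j(u,v̄) = Σ_{k=0}^{N−1} ∏_{l=0}^{k−1} v̄_{j+l} · (u_{j+k}v̄_{j+k} − 1) · ∏_{l=k+1}^{N−1} u_{j+l}, indices mod N), the kernel of the matrix M (defined in the companion statement) is one-dimensional, and it is spanned by the vector ᵗ[g₀ : v̄₀g₁ : v̄₀v̄₁g₂ : ⋯ : (v̄₀⋯v̄_{N−2})g_{N−1}]. -/

import Mathlib

open Matrix Finset

/-- `p_j = u_j v̄_j − 1`, indices in `ℤ/Nℤ`. -/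
def pBKP {N : ℕ} (u vb : ZMod N → ℂ) (j : ZMod N) : ℂ := u j * vb j - 1

/-- `q_j = p_j u_{j+1} + v̄_j p_{j+1}`, indices in `ℤ/Nℤ`. -/
def qBKP {N : ℕ} (u vb : ZMod N → ℂ) (j : ZMod N) : ℂ :=
  pBKP u vb j * u (j + 1) + vb j * pBKP u vb (j + 1)

/-- `V = ∏_{k=0}^{N−1} v̄_k`. -/
def VBKP {N : ℕ} (vb : ZMod N → ℂ) : ℂ := ∏ k ∈ Finset.range N, vb (k : ZMod N)

/-- The partial sums `g_j^{(n)}(u,v̄) = Σ_{k=0}^{n} ∏_{l=0}^{k−1} v̄_{j+l} ·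
(u_{j+k}v̄_{j+k} − 1) · ∏_{l=k+1}^{n} u_{j+l}`. -/
noncomputable def gPart {N : ℕ} (u vb : ZMod N → ℂ) (j : ZMod N) (n : ℕ) : ℂ :=
  ∑ k ∈ Finset.range (n + 1),
    (∏ l ∈ Finset.range k, vb (j + (l : ℕ))) *
      (u (j + (k : ℕ)) * vb (j + (k : ℕ)) - 1) *
      ∏ l ∈ Finset.Icc (k + 1) n, u (j + (l : ℕ))

/-- `g_j(u,v̄) = g_j^{(N−1)}(u,v̄)`. -/
noncomputable def gBKP {N : ℕ} (u vb : ZMod N → ℂ) (j : ZMod N) : ℂ := gPart u vb j (N - 1)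

/-- The matrix `M` of the linear system for the Yang–Baxter map of
the `N`-reduced discrete BKP equation. -/
noncomputable def MBKP (N : ℕ) (u vb : ZMod N → ℂ) : Matrix (Fin N) (Fin N) ℂ :=
  Matrix.of fun i j =>
    let i' : ZMod N := ((i : ℕ) : ZMod N)
    if (i : ℕ) ≤ N - 3 then
      (if (j : ℕ) = (i : ℕ) then -(u i' * vb i' * pBKP u vb (i' + 1))
       else if (j : ℕ) = (i : ℕ) + 1 then qBKP u vb i'
       else if (j : ℕ) = (i : ℕ) + 2 then -pBKP u vb i'
       else 0)
    else if (i : ℕ) = N - 2 then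
      (if (j : ℕ) = 0 then -pBKP u vb i' * VBKP vb
       else if (j : ℕ) = N - 2 then -(u i' * vb i' * pBKP u vb (i' + 1))
       else if (j : ℕ) = N - 1 then qBKP u vb i'
       else 0)
    else
      (if (j : ℕ) = 0 then qBKP u vb i' * VBKP vb
       else if (j : ℕ) = 1 then -pBKP u vb i' * VBKP vb
       else if (j : ℕ) = N - 1 then -(u i' * vb i' * pBKP u vb (i' + 1))
       else 0)

/-- The vector `ᵗ[g₀ : v̄₀g₁ : v̄₀v̄₁g₂ : ⋯ : (v̄₀⋯v̄_{N−2})g_{N−1}]`. -/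
noncomputable def xBKP (N : ℕ) (u vb : ZMod N → ℂ) : Fin N → ℂ :=
  fun j => (∏ k ∈ Finset.range (j : ℕ), vb (k : ZMod N)) * gBKP u vb ((j : ℕ) : ZMod N)

namespace BKPaux

lemma Icc_shift (f : ℕ → ℂ) (a b : ℕ) :
    ∏ l ∈ Finset.Icc (a+1) (b+1), f l = ∏ l ∈ Finset.Icc a b, f (l+1) := by
  rw [← Finset.Ico_add_one_right_eq_Icc, ← Finset.Ico_add_one_right_eq_Icc, Finset.prod_Ico_eq_prod_range,
    Finset.prod_Ico_eq_prod_range]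
  have h : b + 1 + 1 - (a + 1) = b + 1 - a := by omega
  rw [h]
  exact Finset.prod_congr rfl fun i _ => by congr 1; omega

variable {N : ℕ} (u vb : ZMod N → ℂ)

lemma R1 (j : ZMod N) (n : ℕ) :
    gPart u vb j (n+1) = gPart u vb j n * u (j + ((n+1 : ℕ) : ZMod N)) +
      (∏ l ∈ Finset.range (n+1), vb (j + (l : ℕ))) *
        (u (j + ((n+1 : ℕ) : ZMod N)) * vb (j + ((n+1 : ℕ) : ZMod N)) - 1) := by
  unfold gPart
  rw [Finset.sum_range_succ, Finset.Icc_eq_empty (by omega), Finset.prod_empty, mul_one,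
    Finset.sum_mul]
  congr 1
  refine Finset.sum_congr rfl fun k hk => ?_
  have hk' := Finset.mem_range.mp hk
  rw [Finset.prod_Icc_succ_top (by omega)]
  ring

lemma R2 (j : ZMod N) (n : ℕ) :
    gPart u vb j (n+1) = (u j * vb j - 1) * (∏ l ∈ Finset.Icc 1 (n+1), u (j + (l : ℕ))) +
      vb j * gPart u vb (j+1) n := by
  have hc : ∀ (a : ZMod N) (l : ℕ), a + ((l+1 : ℕ) : ZMod N) = (a+1) + (l : ℕ) := by
    intro a l; push_cast; ring
  unfold gPart
  rw [Finset.sum_range_succ', Finset.mul_sum, add_comm]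
  congr 1
  · simp
  · refine Finset.sum_congr rfl fun k hk => ?_
    rw [Finset.prod_range_succ', Icc_shift]
    simp only [hc, Nat.cast_zero, add_zero]
    ring


lemma prod_range_eq_univ [NeZero N] (f : ZMod N → ℂ) :
    ∏ l ∈ Finset.range N, f (l : ℕ) = ∏ x : ZMod N, f x :=
  Finset.prod_nbij' (fun l => ((l : ℕ) : ZMod N)) (fun x => x.val)
    (fun a _ => Finset.mem_univ _) (fun x _ => Finset.mem_range.mpr (ZMod.val_lt x))
    (fun a ha => ZMod.val_cast_of_lt (Finset.mem_range.mp ha))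
    (fun x _ => ZMod.natCast_rightInverse x) (fun a _ => rfl)

lemma prod_cyclic [NeZero N] (f : ZMod N → ℂ) (j : ZMod N) :
    ∏ l ∈ Finset.range N, f (j + (l : ℕ)) = ∏ l ∈ Finset.range N, f ((l : ℕ) : ZMod N) := by
  rw [prod_range_eq_univ (fun x => f (j + x)), prod_range_eq_univ f]
  exact Fintype.prod_equiv (Equiv.addLeft j) _ _ (fun x => rfl)

/-- `u_j · ∏_{l=1}^{N-1} u_{j+l} = U`. -/
lemma uA (hN : 3 ≤ N) (j : ZMod N) :
    u j * (∏ l ∈ Finset.Icc 1 (N-1), u (j + (l : ℕ))) =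
      ∏ k ∈ Finset.range N, u ((k : ℕ) : ZMod N) := by
  haveI : NeZero N := ⟨by omega⟩
  rw [← prod_cyclic u j]
  rw [show Finset.range N = Finset.range ((N-1)+1) by congr 1; omega,
    Finset.prod_range_succ']
  have : ∏ l ∈ Finset.Icc 1 (N-1), u (j + (l : ℕ)) =
      ∏ l ∈ Finset.range (N-1), u (j + ((l+1 : ℕ) : ZMod N)) := by
    have h0 : Finset.Icc 1 (N-1) = Finset.Icc (0+1) ((N-1-1)+1) := by
      congr 1; omega
    rw [h0, Icc_shift]
    have h1 : N - 1 - 1 + 1 = N - 1 := by omega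
    rw [← Finset.Ico_add_one_right_eq_Icc, Finset.range_eq_Ico, ← h1]
    rw [Finset.prod_Ico_eq_prod_range, Finset.prod_Ico_eq_prod_range]
    exact Finset.prod_congr (by congr 1) fun i _ => by norm_num
  rw [this]
  simp [mul_comm]

/-- `v̄_j · ∏_{l=0}^{N-2} v̄_{j+1+l} = V`. -/
lemma vW (hN : 3 ≤ N) (j : ZMod N) :
    vb j * (∏ l ∈ Finset.range (N-1), vb ((j+1) + (l : ℕ))) = VBKP vb := by
  haveI : NeZero N := ⟨by omega⟩
  rw [VBKP, ← prod_cyclic vb j]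
  rw [show Finset.range N = Finset.range ((N-1)+1) by congr 1; omega,
    Finset.prod_range_succ']
  have hc : ∀ (l : ℕ), j + ((l+1 : ℕ) : ZMod N) = (j+1) + (l : ℕ) := by
    intro l; push_cast; ring
  simp only [hc, Nat.cast_zero, add_zero]
  ring


lemma key (hN : 3 ≤ N) (j : ZMod N) :
    vb j * gBKP u vb (j+1) - u j * gBKP u vb j =
      (u j * vb j - 1) * (VBKP vb - ∏ k ∈ Finset.range N, u ((k : ℕ) : ZMod N)) := by
  haveI : NeZero N := ⟨by omega⟩
  have hN1 : N - 1 = (N-2) + 1 := by omega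
  have e1 : gBKP u vb j = (u j * vb j - 1) * (∏ l ∈ Finset.Icc 1 (N-1), u (j + (l : ℕ))) +
      vb j * gPart u vb (j+1) (N-2) := by
    rw [gBKP, hN1, R2, ← hN1]
  have hz : ((N-2+1 : ℕ) : ZMod N) = -1 := by
    have h2 : ((N-2+1+1 : ℕ) : ZMod N) = 0 := by
      rw [show N-2+1+1 = N by omega]; exact ZMod.natCast_self N
    push_cast at h2
    push_cast
    linear_combination h2
  have hcast : (j+1) + ((N-2+1 : ℕ) : ZMod N) = j := by rw [hz]; ring
  have e2 : gBKP u vb (j+1) = gPart u vb (j+1) (N-2) * u j +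
      (∏ l ∈ Finset.range (N-1), vb ((j+1) + (l : ℕ))) * (u j * vb j - 1) := by
    rw [gBKP, hN1, R1, hcast, ← hN1]
  rw [e1, e2]
  linear_combination (u j * vb j - 1) * vW vb hN j - (u j * vb j - 1) * uA u hN j

lemma cyclic (hN : 3 ≤ N) (j : ZMod N) :
    -(u j * vb j * pBKP u vb (j+1)) * gBKP u vb j
      + qBKP u vb j * (vb j * gBKP u vb (j+1))
      - pBKP u vb j * (vb j * (vb (j+1) * gBKP u vb (j+1+1))) = 0 := by
  have h1 := key u vb hN j
  have h2 := key u vb hN (j+1)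
  simp only [pBKP, qBKP]
  linear_combination (vb j * (u (j+1) * vb (j+1) - 1)) * h1
    - ((u j * vb j - 1) * vb j) * h2


lemma sum3 {N : ℕ} (a b c : Fin N) (hab : a ≠ b) (hac : a ≠ c) (hbc : b ≠ c)
    (A B C : ℂ) (w : Fin N → ℂ) :
    (∑ j : Fin N, (if (j : ℕ) = (a : ℕ) then A else if (j : ℕ) = (b : ℕ) then B
      else if (j : ℕ) = (c : ℕ) then C else 0) * w j) = A * w a + B * w b + C * w c := by
  have hsplit : ∀ j : Fin N, (if (j : ℕ) = (a : ℕ) then A else if (j : ℕ) = (b : ℕ) then B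
      else if (j : ℕ) = (c : ℕ) then C else 0) * w j =
      (if j = a then A * w j else 0) + (if j = b then B * w j else 0)
        + (if j = c then C * w j else 0) := by
    intro j
    by_cases h1 : j = a <;> by_cases h2 : j = b <;> by_cases h3 : j = c <;>
      simp_all [Fin.val_eq_val] <;> simp_all [Fin.ext_iff]
  rw [Finset.sum_congr rfl fun j _ => hsplit j]
  rw [Finset.sum_add_distrib, Finset.sum_add_distrib, Finset.sum_ite_eq' Finset.univ,
    Finset.sum_ite_eq' Finset.univ, Finset.sum_ite_eq' Finset.univ]
  simp


lemma rowA (hN : 3 ≤ N) (w : Fin N → ℂ) (i : ℕ) (hi : i ≤ N - 3) :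
    (MBKP N u vb).mulVec w ⟨i, by omega⟩ =
      -(u ((i : ℕ) : ZMod N) * vb ((i : ℕ) : ZMod N) * pBKP u vb (((i : ℕ) : ZMod N) + 1))
          * w ⟨i, by omega⟩
        + qBKP u vb ((i : ℕ) : ZMod N) * w ⟨i+1, by omega⟩
        + (-pBKP u vb ((i : ℕ) : ZMod N)) * w ⟨i+2, by omega⟩ := by
  have h : (MBKP N u vb).mulVec w ⟨i, by omega⟩ =
      ∑ j : Fin N, (if (j : ℕ) = i then
          -(u ((i : ℕ) : ZMod N) * vb ((i : ℕ) : ZMod N) * pBKP u vb (((i : ℕ) : ZMod N) + 1))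
        else if (j : ℕ) = i + 1 then qBKP u vb ((i : ℕ) : ZMod N)
        else if (j : ℕ) = i + 2 then -pBKP u vb ((i : ℕ) : ZMod N) else 0) * w j := by
    simp only [Matrix.mulVec, dotProduct, MBKP, Matrix.of_apply]
    exact Finset.sum_congr rfl fun j _ => by rw [if_pos hi]
  rw [h]
  exact sum3 ⟨i, by omega⟩ ⟨i+1, by omega⟩ ⟨i+2, by omega⟩
    (by simp [Fin.ext_iff] <;> omega) (by simp [Fin.ext_iff] <;> omega) (by simp [Fin.ext_iff] <;> omega)
    _ _ _ w

lemma rowB (hN : 3 ≤ N) (w : Fin N → ℂ) :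
    (MBKP N u vb).mulVec w ⟨N-2, by omega⟩ =
      (-pBKP u vb (((N-2 : ℕ) : ZMod N)) * VBKP vb) * w ⟨0, by omega⟩
        + -(u (((N-2 : ℕ)) : ZMod N) * vb (((N-2 : ℕ)) : ZMod N)
            * pBKP u vb ((((N-2 : ℕ)) : ZMod N) + 1)) * w ⟨N-2, by omega⟩
        + qBKP u vb (((N-2 : ℕ)) : ZMod N) * w ⟨N-1, by omega⟩ := by
  have h : (MBKP N u vb).mulVec w ⟨N-2, by omega⟩ =
      ∑ j : Fin N, (if (j : ℕ) = 0 then -pBKP u vb (((N-2 : ℕ) : ZMod N)) * VBKP vb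
        else if (j : ℕ) = N - 2 then
          -(u (((N-2 : ℕ)) : ZMod N) * vb (((N-2 : ℕ)) : ZMod N)
            * pBKP u vb ((((N-2 : ℕ)) : ZMod N) + 1))
        else if (j : ℕ) = N - 1 then qBKP u vb (((N-2 : ℕ)) : ZMod N) else 0) * w j := by
    simp only [Matrix.mulVec, dotProduct, MBKP, Matrix.of_apply]
    refine Finset.sum_congr rfl fun j _ => ?_
    rw [if_neg (by omega : ¬(N - 2 ≤ N - 3)), if_pos trivial]
  rw [h]
  exact sum3 ⟨0, by omega⟩ ⟨N-2, by omega⟩ ⟨N-1, by omega⟩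
    (by simp [Fin.ext_iff] <;> omega) (by simp [Fin.ext_iff] <;> omega) (by simp [Fin.ext_iff] <;> omega)
    _ _ _ w

lemma rowC (hN : 3 ≤ N) (w : Fin N → ℂ) :
    (MBKP N u vb).mulVec w ⟨N-1, by omega⟩ =
      (qBKP u vb (((N-1 : ℕ)) : ZMod N) * VBKP vb) * w ⟨0, by omega⟩
        + (-pBKP u vb (((N-1 : ℕ) : ZMod N)) * VBKP vb) * w ⟨1, by omega⟩
        + -(u (((N-1 : ℕ)) : ZMod N) * vb (((N-1 : ℕ)) : ZMod N)
            * pBKP u vb ((((N-1 : ℕ)) : ZMod N) + 1)) * w ⟨N-1, by omega⟩ := by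
  have h : (MBKP N u vb).mulVec w ⟨N-1, by omega⟩ =
      ∑ j : Fin N, (if (j : ℕ) = 0 then qBKP u vb (((N-1 : ℕ)) : ZMod N) * VBKP vb
        else if (j : ℕ) = 1 then -pBKP u vb (((N-1 : ℕ) : ZMod N)) * VBKP vb
        else if (j : ℕ) = N - 1 then
          -(u (((N-1 : ℕ)) : ZMod N) * vb (((N-1 : ℕ)) : ZMod N)
            * pBKP u vb ((((N-1 : ℕ)) : ZMod N) + 1)) else 0) * w j := by
    simp only [Matrix.mulVec, dotProduct, MBKP, Matrix.of_apply]
    refine Finset.sum_congr rfl fun j _ => ?_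
    rw [if_neg (by omega : ¬(N - 1 ≤ N - 3)), if_neg (by omega : ¬(N - 1 = N - 2))]
  rw [h]
  exact sum3 ⟨0, by omega⟩ ⟨1, by omega⟩ ⟨N-1, by omega⟩
    (by simp [Fin.ext_iff] <;> omega) (by simp [Fin.ext_iff] <;> omega) (by simp [Fin.ext_iff] <;> omega)
    _ _ _ w


lemma mulVec_x (hN : 3 ≤ N) : (MBKP N u vb).mulVec (xBKP N u vb) = 0 := by
  funext i
  obtain ⟨iv, hiv⟩ := i
  show (MBKP N u vb).mulVec (xBKP N u vb) ⟨iv, hiv⟩ = 0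
  have hzero : (0 : Fin N → ℂ) ⟨iv, hiv⟩ = 0 := rfl
  rcases (by omega : iv ≤ N - 3 ∨ iv = N - 2 ∨ iv = N - 1) with h | h | h
  · rw [rowA u vb hN _ iv h]
    simp only [xBKP]
    rw [Finset.prod_range_succ, Finset.prod_range_succ, Finset.prod_range_succ]
    have c1 : ((iv+1 : ℕ) : ZMod N) = ((iv : ℕ) : ZMod N) + 1 := by push_cast; ring
    have c2 : ((iv+2 : ℕ) : ZMod N) = ((iv : ℕ) : ZMod N) + 1 + 1 := by push_cast; ring
    rw [c1, c2]
    linear_combination (∏ k ∈ Finset.range iv, vb ((k : ℕ) : ZMod N)) *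
      cyclic u vb hN ((iv : ℕ) : ZMod N)
  · subst h
    rw [rowB u vb hN]
    simp only [xBKP]
    have d2 : ((N-2+1 : ℕ) : ZMod N) = ((N-2 : ℕ) : ZMod N) + 1 := by push_cast; ring
    have d3 : ((N-2 : ℕ) : ZMod N) + 1 + 1 = 0 := by
      have : ((N-2+1+1 : ℕ) : ZMod N) = 0 := by
        rw [show N-2+1+1 = N by omega]; exact ZMod.natCast_self N
      push_cast at this
      linear_combination this
    have hC := cyclic u vb hN ((N-2 : ℕ) : ZMod N)
    rw [d3] at hC
    rw [VBKP, show Finset.range N = Finset.range ((N-2)+1+1) by congr 1; omega,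
      Finset.prod_range_succ, Finset.prod_range_succ,
      show Finset.range (N-1) = Finset.range ((N-2)+1) by congr 1; omega,
      Finset.prod_range_succ, d2]
    have d4 : ((N-1 : ℕ) : ZMod N) = ((N-2 : ℕ) : ZMod N) + 1 := by
      rw [show N-1 = N-2+1 by omega]; push_cast; ring
    rw [d4]
    simp only [Finset.range_zero, Finset.prod_empty, one_mul, Nat.cast_zero]
    linear_combination (∏ k ∈ Finset.range (N-2), vb ((k : ℕ) : ZMod N)) * hC
  · subst h
    rw [rowC u vb hN]
    simp only [xBKP]
    have d1 : ((N-1 : ℕ) : ZMod N) + 1 = 0 := by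
      have : ((N-1+1 : ℕ) : ZMod N) = 0 := by
        rw [show N-1+1 = N by omega]; exact ZMod.natCast_self N
      push_cast at this
      linear_combination this
    have hC := cyclic u vb hN ((N-1 : ℕ) : ZMod N)
    rw [d1, zero_add] at hC
    rw [VBKP, show Finset.range N = Finset.range ((N-1)+1) by congr 1; omega,
      Finset.prod_range_succ, d1]
    simp only [Finset.range_zero, Finset.prod_empty, one_mul, Nat.cast_zero,
      Finset.prod_range_one, Nat.cast_one]
    linear_combination (∏ k ∈ Finset.range (N-1), vb ((k : ℕ) : ZMod N)) * hC


noncomputable def Gaux {N : ℕ} (u vb : ZMod N → ℂ) : ℕ → ℂ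
  | 0 => 0
  | n+1 => gPart u vb 0 n

lemma gPart_zero (j : ZMod N) : gPart u vb j 0 = u j * vb j - 1 := by
  unfold gPart
  simp

lemma GauxRec (n : ℕ) :
    Gaux u vb (n+1) = Gaux u vb n * u ((n : ℕ) : ZMod N) +
      (∏ k ∈ Finset.range n, vb ((k : ℕ) : ZMod N)) *
        (u ((n : ℕ) : ZMod N) * vb ((n : ℕ) : ZMod N) - 1) := by
  cases n with
  | zero => simp [Gaux, gPart_zero]
  | succ m =>
    show gPart u vb 0 (m+1) = gPart u vb 0 m * _ + _
    rw [R1]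
    simp only [zero_add]

lemma kernel_form (hN : 3 ≤ N) (hgen : ∀ j : ZMod N, u j * vb j ≠ 1)
    (y : Fin N → ℂ) (hy : (MBKP N u vb).mulVec y = 0) (c : ℂ)
    (hc : y ⟨1, by omega⟩ = u 0 * y ⟨0, by omega⟩ + c * (u 0 * vb 0 - 1)) :
    ∀ n, ∀ hn : n ≤ N - 1, y ⟨n, by omega⟩ =
      y ⟨0, by omega⟩ * (∏ k ∈ Finset.range n, u ((k : ℕ) : ZMod N)) + c * Gaux u vb n := by
  intro n
  induction n using Nat.strong_induction_on with
  | _ n IH =>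
    intro hn
    match n, hn with
    | 0, _ => simp [Gaux]
    | 1, _ =>
      rw [hc]
      show _ = _ * ∏ k ∈ Finset.range (0+1), u ((k : ℕ) : ZMod N) + _ * Gaux u vb (0+1)
      rw [Finset.prod_range_succ, GauxRec]
      simp [Gaux]
      ring
    | (m+2), hn =>
      have hp : u ((m : ℕ) : ZMod N) * vb ((m : ℕ) : ZMod N) - 1 ≠ 0 :=
        sub_ne_zero.mpr (hgen _)
      have c1 : ((m+1 : ℕ) : ZMod N) = ((m : ℕ) : ZMod N) + 1 := by push_cast; ring
      have e1 := IH m (by omega) (by omega)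
      have e2 := IH (m+1) (by omega) (by omega)
      have r1 : Gaux u vb (m+1) = Gaux u vb m * u ((m : ℕ) : ZMod N) +
          (∏ k ∈ Finset.range m, vb ((k : ℕ) : ZMod N)) *
            (u ((m : ℕ) : ZMod N) * vb ((m : ℕ) : ZMod N) - 1) := GauxRec u vb m
      have r2 : Gaux u vb (m+2) = Gaux u vb (m+1) * u (((m+1 : ℕ)) : ZMod N) +
          (∏ k ∈ Finset.range (m+1), vb ((k : ℕ) : ZMod N)) *
            (u ((m+1 : ℕ) : ZMod N) * vb ((m+1 : ℕ) : ZMod N) - 1) := GauxRec u vb (m+1)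
      have hrow := congrFun hy ⟨m, by omega⟩
      rw [rowA u vb hN y m (by omega)] at hrow
      simp only [Pi.zero_apply] at hrow
      simp only [pBKP, qBKP] at hrow
      rw [c1, Finset.prod_range_succ] at r2
      rw [Finset.prod_range_succ] at e2
      rw [r1] at e2 r2
      show y ⟨m+2, by omega⟩ = _ * ∏ k ∈ Finset.range (m+2), u ((k : ℕ) : ZMod N) + _ * Gaux u vb (m+2)
      rw [Finset.prod_range_succ, Finset.prod_range_succ, c1, r2]
      apply mul_left_cancel₀ hp
      linear_combination (-1 : ℂ) * hrow +
        ((u ((m : ℕ) : ZMod N) * vb ((m : ℕ) : ZMod N) - 1) * u (((m : ℕ) : ZMod N) + 1) +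
          vb ((m : ℕ) : ZMod N) *
            (u (((m : ℕ) : ZMod N) + 1) * vb (((m : ℕ) : ZMod N) + 1) - 1)) * e2 -
        (u ((m : ℕ) : ZMod N) * vb ((m : ℕ) : ZMod N) *
          (u (((m : ℕ) : ZMod N) + 1) * vb (((m : ℕ) : ZMod N) + 1) - 1)) * e1


lemma kernel_c (hN : 3 ≤ N) (hgen : ∀ j : ZMod N, u j * vb j ≠ 1)
    (y : Fin N → ℂ) (hy : (MBKP N u vb).mulVec y = 0) (c : ℂ)
    (hc : y ⟨1, by omega⟩ = u 0 * y ⟨0, by omega⟩ + c * (u 0 * vb 0 - 1)) :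
    gPart u vb 0 (N-1) * c =
      (VBKP vb - ∏ k ∈ Finset.range N, u ((k : ℕ) : ZMod N)) * y ⟨0, by omega⟩ := by
  have KF := kernel_form u vb hN hgen y hy c hc
  have hp : u ((N-2 : ℕ) : ZMod N) * vb ((N-2 : ℕ) : ZMod N) - 1 ≠ 0 :=
    sub_ne_zero.mpr (hgen _)
  have cD : ((N-1 : ℕ) : ZMod N) = ((N-2 : ℕ) : ZMod N) + 1 := by
    rw [show N-1 = N-2+1 by omega]; push_cast; ring
  have eA := KF (N-2) (by omega)
  have eB := KF (N-1) (by omega)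
  have rA := GauxRec u vb (N-2)
  rw [show N-2+1 = N-1 by omega] at rA
  have rB := GauxRec u vb (N-1)
  rw [show N-1+1 = N by omega, cD] at rB
  have GNg : Gaux u vb N = gPart u vb 0 (N-1) := by
    have t : Gaux u vb (N-1+1) = gPart u vb 0 (N-1) := rfl
    rw [show N-1+1 = N by omega] at t
    exact t
  have hUA : (∏ k ∈ Finset.range (N-1), u ((k : ℕ) : ZMod N)) =
      (∏ k ∈ Finset.range (N-2), u ((k : ℕ) : ZMod N)) * u ((N-2 : ℕ) : ZMod N) := by
    rw [show Finset.range (N-1) = Finset.range ((N-2)+1) by congr 1; omega,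
      Finset.prod_range_succ]
  have hUB : (∏ k ∈ Finset.range N, u ((k : ℕ) : ZMod N)) =
      (∏ k ∈ Finset.range (N-1), u ((k : ℕ) : ZMod N)) * u (((N-2 : ℕ) : ZMod N) + 1) := by
    rw [show Finset.range N = Finset.range ((N-1)+1) by congr 1; omega,
      Finset.prod_range_succ, cD]
  have hPA : (∏ k ∈ Finset.range (N-1), vb ((k : ℕ) : ZMod N)) =
      (∏ k ∈ Finset.range (N-2), vb ((k : ℕ) : ZMod N)) * vb ((N-2 : ℕ) : ZMod N) := by
    rw [show Finset.range (N-1) = Finset.range ((N-2)+1) by congr 1; omega,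
      Finset.prod_range_succ]
  have VN : VBKP vb =
      (∏ k ∈ Finset.range (N-1), vb ((k : ℕ) : ZMod N)) * vb (((N-2 : ℕ) : ZMod N) + 1) := by
    rw [VBKP, show Finset.range N = Finset.range ((N-1)+1) by congr 1; omega,
      Finset.prod_range_succ, cD]
  have hrow := congrFun hy ⟨N-2, by omega⟩
  rw [rowB u vb hN y] at hrow
  simp only [Pi.zero_apply] at hrow
  simp only [pBKP, qBKP] at hrow
  rw [eA, eB, rA, hUA, VN, hPA] at hrow
  rw [← GNg, rB, rA, hUB, hUA, VN, hPA]
  apply mul_left_cancel₀ hp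
  linear_combination hrow

end BKPaux

theorem kernel_MBKP (N : ℕ) (hN : 3 ≤ N) (u vb : ZMod N → ℂ)
    (hgen : ∀ j : ZMod N, u j * vb j ≠ 1)
    (hg : ∀ j : ZMod N, ∀ n ≤ N - 1, gPart u vb j n ≠ 0) :
    (MBKP N u vb).mulVec (xBKP N u vb) = 0 ∧
      xBKP N u vb ≠ 0 ∧
      ∀ y : Fin N → ℂ, (MBKP N u vb).mulVec y = 0 →
        ∃ c : ℂ, y = c • xBKP N u vb := by
  have hp0 : u 0 * vb 0 - 1 ≠ 0 := sub_ne_zero.mpr (hgen 0)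
  have hg0 : gPart u vb 0 (N-1) ≠ 0 := hg 0 (N-1) le_rfl
  have hx0 : xBKP N u vb ⟨0, by omega⟩ = gPart u vb 0 (N-1) := by
    simp [xBKP, gBKP]
  refine ⟨BKPaux.mulVec_x u vb hN, ?_, ?_⟩
  · intro h0
    apply hg0
    rw [← hx0]
    exact congrFun h0 ⟨0, by omega⟩
  · intro y hy
    refine ⟨y ⟨0, by omega⟩ / gPart u vb 0 (N-1), ?_⟩
    funext i
    obtain ⟨n, hn⟩ := i
    have hcY : y ⟨1, by omega⟩ = u 0 * y ⟨0, by omega⟩ +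
        ((y ⟨1, by omega⟩ - u 0 * y ⟨0, by omega⟩) / (u 0 * vb 0 - 1)) * (u 0 * vb 0 - 1) := by
      field_simp
      ring
    have KFy := BKPaux.kernel_form u vb hN hgen y hy _ hcY
    have hCy := BKPaux.kernel_c u vb hN hgen y hy _ hcY
    have hx := BKPaux.mulVec_x u vb hN
    have hcX : xBKP N u vb ⟨1, by omega⟩ = u 0 * xBKP N u vb ⟨0, by omega⟩ +
        ((xBKP N u vb ⟨1, by omega⟩ - u 0 * xBKP N u vb ⟨0, by omega⟩) / (u 0 * vb 0 - 1)) *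
          (u 0 * vb 0 - 1) := by
      field_simp
      ring
    have KFx := BKPaux.kernel_form u vb hN hgen _ hx _ hcX
    have hCx := BKPaux.kernel_c u vb hN hgen _ hx _ hcX
    have hyn := KFy n (by omega)
    have hxn := KFx n (by omega)
    rw [hx0] at hCx hxn
    have hcx' : (xBKP N u vb ⟨1, by omega⟩ - u 0 * gPart u vb 0 (N-1)) / (u 0 * vb 0 - 1) =
        VBKP vb - ∏ k ∈ Finset.range N, u ((k : ℕ) : ZMod N) := by
      apply mul_left_cancel₀ hg0
      linear_combination hCx
    rw [hcx'] at hxn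
    show y ⟨n, hn⟩ = (y ⟨0, by omega⟩ / gPart u vb 0 (N-1)) • xBKP N u vb ⟨n, hn⟩
    rw [smul_eq_mul, div_mul_eq_mul_div, eq_div_iff hg0, hxn, hyn]
    linear_combination (BKPaux.Gaux u vb n) * hCy
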